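/- (Defining equation of the Newton groupoid, Lemma on the embedding, part (i).) Fix an integer r ≥ 2. Let S be a commutative k-algebra and (x,y,ξ,η) ∈ Sⁿ × Sˡ × Sⁿ × Sˡ such that f(x,y) = 0 and Q(x,y) is a nonzerodivisor in S. Set x̃ := x + Q(x,y)^{r}·ξ and ỹ := y + Q(x,y)^{r-1}·η. Then f(x̃,ỹ) = 0 if and only if η + Ĉ(x,y)·u(x,y,ξ,η) = 0 in Sˡ. -/

import Mathlib

open MvPolynomial Matrix

noncomputable section

/-- The `l×l` Jacobian matrix `C(x,y)` of `f` with respect to the `y`-variables. -/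
def jacC {k : Type*} [Field k] {n l : ℕ} (f : Fin l → MvPolynomial (Fin n ⊕ Fin l) k) :
    Matrix (Fin l) (Fin l) (MvPolynomial (Fin n ⊕ Fin l) k) :=
  Matrix.of fun i j => pderiv (Sum.inr j) (f i)

/-- `Q(x,y) := det C(x,y)`. -/
def jacQ {k : Type*} [Field k] {n l : ℕ} (f : Fin l → MvPolynomial (Fin n ⊕ Fin l) k) :
    MvPolynomial (Fin n ⊕ Fin l) k :=
  (jacC f).det

/-- In the polynomial ring `k[x,y,ξ,η]` (variables indexed by
`(Fin n ⊕ Fin l) ⊕ (Fin n ⊕ Fin l)`, the first summand being the `(x,y)`-variables and the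
second the `(ξ,η)`-variables), the substitution sending `x_i ↦ x_i + Q(x,y)^r·ξ_i` and
`y_j ↦ y_j + Q(x,y)^(r-1)·η_j`. -/
def newtonSubst {k : Type*} [Field k] {n l : ℕ} (f : Fin l → MvPolynomial (Fin n ⊕ Fin l) k)
    (r : ℕ) : Fin n ⊕ Fin l → MvPolynomial ((Fin n ⊕ Fin l) ⊕ (Fin n ⊕ Fin l)) k :=
  fun w => Sum.elim
    (fun i => X (Sum.inl (Sum.inl i)) +
      (rename Sum.inl (jacQ f)) ^ r * X (Sum.inr (Sum.inl i)))
    (fun j => X (Sum.inl (Sum.inr j)) +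
      (rename Sum.inl (jacQ f)) ^ (r - 1) * X (Sum.inr (Sum.inr j))) w

/-- The property defining the polynomial (vector) `u(x,y,ξ,η)`:
`Q^r·u = f(x+Q^r ξ, y+Q^(r-1) η) − f(x,y) − Q^(r-1)·C(x,y)·η` in `k[x,y,ξ,η]`. -/
def IsNewtonU {k : Type*} [Field k] {n l : ℕ} (f : Fin l → MvPolynomial (Fin n ⊕ Fin l) k)
    (r : ℕ) (uP : Fin l → MvPolynomial ((Fin n ⊕ Fin l) ⊕ (Fin n ⊕ Fin l)) k) : Prop :=
  ∀ i, (rename Sum.inl (jacQ f)) ^ r * uP i =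
    aeval (newtonSubst f r) (f i) - rename Sum.inl (f i) -
      (rename Sum.inl (jacQ f)) ^ (r - 1) *
        ∑ j : Fin l, rename Sum.inl (jacC f i j) * X (Sum.inr (Sum.inr j))

/-- The property defining the polynomial `v(x,y,ξ,η)`:
`Q·v = Q(x+Q^r ξ, y+Q^(r-1) η)` in `k[x,y,ξ,η]`. -/
def IsNewtonV {k : Type*} [Field k] {n l : ℕ} (f : Fin l → MvPolynomial (Fin n ⊕ Fin l) k)
    (r : ℕ) (vP : MvPolynomial ((Fin n ⊕ Fin l) ⊕ (Fin n ⊕ Fin l)) k) : Prop :=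
  (rename Sum.inl (jacQ f)) * vP = aeval (newtonSubst f r) (jacQ f)

/-- **Defining equation of the Newton groupoid (embedding lemma, part (i)).**
Fix `r ≥ 2`.  Let `S` be a commutative `k`-algebra and `(x,y,ξ,η) ∈ Sⁿ × Sˡ × Sⁿ × Sˡ`
with `f(x,y) = 0` and `Q(x,y)` a nonzerodivisor in `S`.  Put `x̃ := x + Q(x,y)^r·ξ`,
`ỹ := y + Q(x,y)^(r-1)·η`.  Then `f(x̃,ỹ) = 0` iff `η + Ĉ(x,y)·u(x,y,ξ,η) = 0` in `Sˡ`. -/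
theorem newton_groupoid_defining_equation {k : Type*} [Field k] {n l : ℕ}
    (hn : 1 ≤ n) (hl : 1 ≤ l)
    (f : Fin l → MvPolynomial (Fin n ⊕ Fin l) k) (r : ℕ) (hr : 2 ≤ r)
    (uP : Fin l → MvPolynomial ((Fin n ⊕ Fin l) ⊕ (Fin n ⊕ Fin l)) k)
    (hu : IsNewtonU f r uP)
    (S : Type*) [CommRing S] [Algebra k S]
    (x : Fin n → S) (y : Fin l → S) (ξ : Fin n → S) (η : Fin l → S)
    (hf : ∀ i, aeval (Sum.elim x y) (f i) = 0)
    (hQ : aeval (Sum.elim x y) (jacQ f) ∈ nonZeroDivisors S) :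
    (∀ i, aeval (Sum.elim
        (fun i' => x i' + (aeval (Sum.elim x y) (jacQ f)) ^ r * ξ i')
        (fun j' => y j' + (aeval (Sum.elim x y) (jacQ f)) ^ (r - 1) * η j')) (f i) = 0) ↔
    (∀ i, η i +
        (Matrix.of fun i' j' => aeval (Sum.elim x y) (jacC f i' j')).adjugate.mulVec
          (fun i' => aeval (Sum.elim (Sum.elim x y) (Sum.elim ξ η)) (uP i')) i = 0) := by
  classical
  set φ : MvPolynomial ((Fin n ⊕ Fin l) ⊕ (Fin n ⊕ Fin l)) k →ₐ[k] S :=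
    aeval (Sum.elim (Sum.elim x y) (Sum.elim ξ η)) with hφdef
  set ψ : MvPolynomial (Fin n ⊕ Fin l) k →ₐ[k] S := aeval (Sum.elim x y) with hψdef
  set QS : S := ψ (jacQ f) with hQSdef
  set CS : Matrix (Fin l) (Fin l) S := Matrix.of fun i' j' => ψ (jacC f i' j') with hCSdef
  set uS : Fin l → S := fun i' => φ (uP i') with huSdef
  have hren : ∀ p : MvPolynomial (Fin n ⊕ Fin l) k, φ (rename Sum.inl p) = ψ p := by
    intro p
    rw [hφdef, hψdef]
    simp [aeval_rename]
  have hX : ∀ j : Fin l, φ (X (Sum.inr (Sum.inr j))) = η j := by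
    intro j
    rw [hφdef]
    simp
  have hsub : ∀ p : MvPolynomial (Fin n ⊕ Fin l) k,
      φ (aeval (newtonSubst f r) p) =
      aeval (Sum.elim (fun i' => x i' + QS ^ r * ξ i')
        (fun j' => y j' + QS ^ (r - 1) * η j')) p := by
    intro p
    have hfn : (fun w => φ (newtonSubst f r w)) =
        Sum.elim (fun i' => x i' + QS ^ r * ξ i')
          (fun j' => y j' + QS ^ (r - 1) * η j') := by
      funext w
      cases w with
      | inl i =>
        simp only [newtonSubst, Sum.elim_inl, map_add, _root_.map_mul, map_pow, hren]
        rw [hφdef]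
        simp
        rfl
      | inr j =>
        simp only [newtonSubst, Sum.elim_inr, map_add, _root_.map_mul, map_pow, hren]
        rw [hφdef]
        simp
        rfl
    rw [comp_aeval_apply (newtonSubst f r) φ p, hfn]
  have key : ∀ i,
      aeval (Sum.elim (fun i' => x i' + QS ^ r * ξ i')
        (fun j' => y j' + QS ^ (r - 1) * η j')) (f i) =
      QS ^ (r - 1) * (QS * uS i + CS.mulVec η i) := by
    intro i
    have h := congrArg φ (hu i)
    simp only [_root_.map_mul, map_pow, map_sub, map_sum, hren, hsub, hX] at h
    rw [hf i, sub_zero] at h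
    rw [eq_sub_iff_add_eq] at h
    rw [← h]
    have hmv : CS.mulVec η i = ∑ j, ψ (jacC f i j) * η j := rfl
    have hrr : QS ^ r = QS * QS ^ (r - 1) := by
      rw [← pow_succ']
      congr 1
      omega
    rw [hmv, hrr]
    ring
  have hdet : CS.det = QS := by
    rw [hCSdef, hQSdef, jacQ]
    exact (AlgHom.map_det ψ (jacC f)).symm
  have hQpow : QS ^ (r - 1) ∈ nonZeroDivisors S := pow_mem hQ _
  have hfun : (fun j => η j + (CS.adjugate.mulVec uS) j) = η + CS.adjugate.mulVec uS := rfl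
  constructor
  · intro h i
    have h1 : ∀ j, QS * uS j + CS.mulVec η j = 0 := by
      intro j
      have h0 := (key j) ▸ h j
      exact hQpow.2 _ (by rw [mul_comm]; exact h0)
    have h2 : CS.mulVec (η + CS.adjugate.mulVec uS) = 0 := by
      rw [Matrix.mulVec_add, Matrix.mulVec_mulVec, Matrix.mul_adjugate, hdet,
        Matrix.smul_mulVec, Matrix.one_mulVec]
      funext j
      simp only [Pi.add_apply, Pi.smul_apply, smul_eq_mul, Pi.zero_apply]
      linear_combination h1 j
    have h3 : CS.adjugate.mulVec (CS.mulVec (η + CS.adjugate.mulVec uS)) = 0 := by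
      rw [h2]; simp
    rw [Matrix.mulVec_mulVec, Matrix.adjugate_mul, hdet, Matrix.smul_mulVec,
      Matrix.one_mulVec] at h3
    have h4 := congrFun h3 i
    simp only [Pi.smul_apply, Pi.add_apply, smul_eq_mul, Pi.zero_apply] at h4
    exact hQ.2 _ (by rw [mul_comm]; exact h4)
  · intro h i
    rw [key i]
    have h0 : (fun j => η j + CS.adjugate.mulVec uS j) = (0 : Fin l → S) := funext h
    have h2 : CS.mulVec η + QS • uS = 0 := by
      have h5 : CS.mulVec (η + CS.adjugate.mulVec uS) = 0 := by
        rw [← hfun, h0]; simp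
      rw [Matrix.mulVec_add, Matrix.mulVec_mulVec, Matrix.mul_adjugate, hdet,
        Matrix.smul_mulVec, Matrix.one_mulVec] at h5
      exact h5
    have h3 := congrFun h2 i
    simp only [Pi.add_apply, Pi.smul_apply, smul_eq_mul, Pi.zero_apply] at h3
    have : QS * uS i + CS.mulVec η i = 0 := by linear_combination h3
    rw [this, mul_zero]

end
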